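/- Let $n\ge 2$ and $1\le k\le n$ be integers, $h\in\mathbb{R}$, $c>0$, and let $g:(a_1,a_2)\to\mathbb{R}$ be positive, differentiable with $g'(t)\ne 0$ and $(g'(t))^2 = c + g(t)^2 - g(t)^2\,(h+g(t)^{-n})^2$ for all $t$. Set $\lambda = h+g^{-n}$, $r = g/\sqrt{c}$, fix $t_0\in(a_1,a_2)$ and let $\theta(t)=\int_{t_0}^t \frac{r(\tau)\lambda(\tau)}{r(\tau)^2+1}\,d\tau$. Let $B_2(s)\in\mathbb{R}^{n+2}$ have $\cosh s$ in coordinate $k$, $\sinh s$ in coordinate $k+1$ and $0$ elsewhere, and $B_3(s)$ have $\sinh s$ in coordinate $k$, $\cosh s$ in coordinate $k+1$ and $0$ elsewhere. Then $(r')^2 + r^2\lambda^2 = r^2 + 1$ on $(a_1,a_2)$, and for every $y\in\mathbb{R}^{n+2}$ with $y_k=y_{k+1}=0$ and $\langle y,y\rangle = 1$, the curves $\phi(u) = r(u)\,y + \sqrt{r(u)^2+1}\,B_2(\theta(u))$ and $\nu(u) = -r(u)\lambda(u)\,y - \frac{r(u)^2\lambda(u)}{\sqrt{r(u)^2+1}}\,B_2(\theta(u))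 + \frac{r'(u)}{\sqrt{r(u)^2+1}}\,B_3(\theta(u))$ satisfy: $\langle\phi,\phi\rangle\equiv -1$, $\langle\phi',\phi'\rangle\equiv 1$, $\langle\nu,\nu\rangle\equiv 1$, $\langle\nu,\phi'\rangle\equiv 0$, $\langle\nu(u),v\rangle = 0$ for every $v\in\mathbb{R}^{n+2}$ with $v_k=v_{k+1}=0$ and $\langle v,y\rangle = 0$, and $\nu'(u) = -(nh-(n-1)\lambda(u))\,\phi'(u)$ for all $u$. -/

import Mathlib

set_option maxHeartbeats 3000000

/-- The semi-riemannian bilinear form of index `k` on `ℝ^m`: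
`⟨v,w⟩ = -v₁w₁ - ⋯ - v_k w_k + v_{k+1} w_{k+1} + ⋯ + v_m w_m`
(coordinates are 0-indexed in Lean, so the first `k` indices carry sign `-1`). -/
noncomputable def semiForm (k : ℕ) {m : ℕ} (v w : Fin m → ℝ) : ℝ :=
  ∑ i : Fin m, (if (i : ℕ) < k then (-1 : ℝ) else 1) * v i * w i

lemma semiForm_comm {k m : ℕ} (v w : Fin m → ℝ) : semiForm k v w = semiForm k w v := by
  unfold semiForm; exact Finset.sum_congr rfl fun i _ => by ring

lemma semiForm_add_left {k m : ℕ} (v v' w : Fin m → ℝ) :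
    semiForm k (v + v') w = semiForm k v w + semiForm k v' w := by
  unfold semiForm; rw [← Finset.sum_add_distrib]
  exact Finset.sum_congr rfl fun i _ => by by_cases hik : (i:ℕ) < k <;> simp [Pi.add_apply, hik] <;> ring

lemma semiForm_sub_left {k m : ℕ} (v v' w : Fin m → ℝ) :
    semiForm k (v - v') w = semiForm k v w - semiForm k v' w := by
  unfold semiForm; rw [← Finset.sum_sub_distrib]
  exact Finset.sum_congr rfl fun i _ => by by_cases hik : (i:ℕ) < k <;> simp [Pi.sub_apply, hik] <;> ring

lemma semiForm_smul_left {k m : ℕ} (a : ℝ) (v w : Fin m → ℝ) :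
    semiForm k (a • v) w = a * semiForm k v w := by
  unfold semiForm; rw [Finset.mul_sum]
  exact Finset.sum_congr rfl fun i _ => by by_cases hik : (i:ℕ) < k <;> simp [Pi.smul_apply, smul_eq_mul, hik] <;> ring

lemma semiForm_add_right {k m : ℕ} (v w w' : Fin m → ℝ) :
    semiForm k v (w + w') = semiForm k v w + semiForm k v w' := by
  rw [semiForm_comm, semiForm_add_left, semiForm_comm w v, semiForm_comm w' v]

lemma semiForm_sub_right {k m : ℕ} (v w w' : Fin m → ℝ) :
    semiForm k v (w - w') = semiForm k v w - semiForm k v w' := by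
  rw [semiForm_comm, semiForm_sub_left, semiForm_comm w v, semiForm_comm w' v]

lemma semiForm_smul_right {k m : ℕ} (a : ℝ) (v w : Fin m → ℝ) :
    semiForm k v (a • w) = a * semiForm k v w := by
  rw [semiForm_comm, semiForm_smul_left, semiForm_comm w v]

lemma semiForm_single_left {k m : ℕ} (j : Fin m) (x : ℝ) (w : Fin m → ℝ) :
    semiForm k (Pi.single j x) w = (if (j : ℕ) < k then (-1:ℝ) else 1) * x * w j := by
  unfold semiForm
  rw [Finset.sum_eq_single j]
  · simp
  · intro i _ hij; simp [Pi.single_apply, hij]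
  · intro hj; exact absurd (Finset.mem_univ j) hj

lemma semiForm_single_right {k m : ℕ} (j : Fin m) (x : ℝ) (w : Fin m → ℝ) :
    semiForm k w (Pi.single j x) = (if (j : ℕ) < k then (-1:ℝ) else 1) * x * w j := by
  rw [semiForm_comm, semiForm_single_left]

/-- Theorem 2.16 of the paper (a family of cmc hypersurfaces of `ℍ_{k-1}^{n+1}`).
Coordinates `k` and `k+1` of the paper (1-indexed) are indices `k-1` and `k` here. -/
theorem stmt_7 (n k : ℕ) (hn : 2 ≤ n) (hk1 : 1 ≤ k) (hkn : k ≤ n)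
    (h c a₁ a₂ t₀ : ℝ) (hc : 0 < c) (ht₀ : t₀ ∈ Set.Ioo a₁ a₂)
    (g lam r θ : ℝ → ℝ)
    (hgdiff : ∀ t ∈ Set.Ioo a₁ a₂, DifferentiableAt ℝ g t)
    (hgpos : ∀ t ∈ Set.Ioo a₁ a₂, 0 < g t)
    (hg' : ∀ t ∈ Set.Ioo a₁ a₂, deriv g t ≠ 0)
    (hode : ∀ t ∈ Set.Ioo a₁ a₂,
      deriv g t ^ 2 = c + g t ^ 2 - g t ^ 2 * (h + g t ^ (-(n : ℤ))) ^ 2)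
    (hlam : ∀ t, lam t = h + g t ^ (-(n : ℤ)))
    (hr : ∀ t, r t = g t / Real.sqrt c)
    (hθ : ∀ t, θ t = ∫ τ in t₀..t, r τ * lam τ / (r τ ^ 2 + 1))
    (B₂ B₃ : ℝ → Fin (n + 2) → ℝ)
    (hB₂ : ∀ s i, B₂ s i =
      if (i : ℕ) = k - 1 then Real.cosh s else if (i : ℕ) = k then Real.sinh s else 0)
    (hB₃ : ∀ s i, B₃ s i =
      if (i : ℕ) = k - 1 then Real.sinh s else if (i : ℕ) = k then Real.cosh s else 0) :
    (∀ t ∈ Set.Ioo a₁ a₂, deriv r t ^ 2 + r t ^ 2 * lam t ^ 2 = r t ^ 2 + 1) ∧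
    ∀ y : Fin (n + 2) → ℝ,
      (∀ i : Fin (n + 2), ((i : ℕ) = k - 1 ∨ (i : ℕ) = k) → y i = 0) →
      semiForm k y y = 1 →
      ∀ φ ν : ℝ → Fin (n + 2) → ℝ,
        (∀ u, φ u = r u • y + Real.sqrt (r u ^ 2 + 1) • B₂ (θ u)) →
        (∀ u, ν u = (-(r u * lam u)) • y
            - (r u ^ 2 * lam u / Real.sqrt (r u ^ 2 + 1)) • B₂ (θ u)
            + (deriv r u / Real.sqrt (r u ^ 2 + 1)) • B₃ (θ u)) →
        ∀ u ∈ Set.Ioo a₁ a₂,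
          semiForm k (φ u) (φ u) = -1 ∧
          semiForm k (deriv φ u) (deriv φ u) = 1 ∧
          semiForm k (ν u) (ν u) = 1 ∧
          semiForm k (ν u) (deriv φ u) = 0 ∧
          (∀ v : Fin (n + 2) → ℝ,
            (∀ i : Fin (n + 2), ((i : ℕ) = k - 1 ∨ (i : ℕ) = k) → v i = 0) →
            semiForm k v y = 0 → semiForm k (ν u) v = 0) ∧
          deriv ν u = (-((n : ℝ) * h - ((n : ℝ) - 1) * lam u)) • deriv φ u := by
  have hIo : IsOpen (Set.Ioo a₁ a₂) := isOpen_Ioo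
  have hscpos : 0 < Real.sqrt c := Real.sqrt_pos.2 hc
  have hscne : Real.sqrt c ≠ 0 := ne_of_gt hscpos
  have hsc2 : Real.sqrt c ^ 2 = c := Real.sq_sqrt hc.le
  have hrfun : r = fun t => g t / Real.sqrt c := funext hr
  have hlamfun : lam = fun t => h + g t ^ (-(n : ℤ)) := funext hlam
  have hderivr : ∀ t, deriv r t = deriv g t / Real.sqrt c := by
    intro t; rw [hrfun]; exact deriv_div_const _
  have hRd : ∀ t ∈ Set.Ioo a₁ a₂, HasDerivAt r (deriv r t) t := by
    intro t ht
    rw [hderivr t, hrfun]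
    exact ((hgdiff t ht).hasDerivAt).div_const _
  have part1 : ∀ t ∈ Set.Ioo a₁ a₂, deriv r t ^ 2 + r t ^ 2 * lam t ^ 2 = r t ^ 2 + 1 := by
    intro t ht
    have h1 := hode t ht
    rw [← hlam t] at h1
    rw [hderivr t, hr t]
    field_simp [hsc2]
    linear_combination h1 - hsc2
  refine ⟨part1, ?_⟩
  intro y hy hyy φ ν hφdef hνdef u hu
  -- basic positivity facts at u
  have hgne : g u ≠ 0 := (hgpos u hu).ne'
  have hR0 : 0 < r u := by rw [hr u]; exact div_pos (hgpos u hu) hscpos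
  have hRne : r u ≠ 0 := hR0.ne'
  have hR'ne : deriv r u ≠ 0 := by
    rw [hderivr u]; exact div_ne_zero (hg' u hu) hscne
  have hru2 : (0:ℝ) < r u ^ 2 + 1 := by positivity
  set s : ℝ := Real.sqrt (r u ^ 2 + 1) with hsdef
  have hs0 : 0 < s := Real.sqrt_pos.2 hru2
  have hsne : s ≠ 0 := hs0.ne'
  have hs2 : s ^ 2 = r u ^ 2 + 1 := Real.sq_sqrt hru2.le
  have h1s : deriv r u ^ 2 + r u ^ 2 * lam u ^ 2 = s ^ 2 := by
    rw [hs2]; exact part1 u hu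
  -- derivative of lam at u
  have hLd' := ((hasDerivAt_zpow (-(n:ℤ)) (g u) (Or.inl hgne)).comp u
      ((hgdiff u hu).hasDerivAt)).const_add h
  set Lv : ℝ := -((n:ℝ) * g u ^ (-(n:ℤ) - 1) * deriv g u) with hLvdef
  have hLd : HasDerivAt lam Lv u := by rw [hlamfun]; simpa [Function.comp] using hLd'
  have hLvrel : r u * Lv = -(n:ℝ) * (lam u - h) * deriv r u := by
    rw [hr u, hlam u, hderivr u, hLvdef, zpow_sub_one₀ hgne]
    push_cast
    field_simp
    ring
  -- second derivative of r at u
  have hsign := hasDerivWithinAt_forall_lt_or_forall_gt_of_forall_ne (convex_Ioo a₁ a₂)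
      (fun t ht => ((hgdiff t ht).hasDerivAt).hasDerivWithinAt) (m := 0) hg'
  have hFeq : ∀ t ∈ Set.Ioo a₁ a₂,
      c + g t ^ 2 - g t ^ 2 * lam t ^ 2 = deriv g t ^ 2 := by
    intro t ht
    have := hode t ht
    rw [← hlam t] at this
    linarith
  have hε : ∃ ε : ℝ, ∀ t ∈ Set.Ioo a₁ a₂,
      deriv g t = ε * Real.sqrt (c + g t ^ 2 - g t ^ 2 * lam t ^ 2) := by
    rcases hsign with hneg | hpos
    · exact ⟨-1, fun t ht => by
        rw [hFeq t ht, Real.sqrt_sq_eq_abs, abs_of_neg (hneg t ht)]; ring⟩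
    · exact ⟨1, fun t ht => by
        rw [hFeq t ht, Real.sqrt_sq_eq_abs, abs_of_pos (hpos t ht)]; ring⟩
  obtain ⟨ε, hεdef⟩ := hε
  have hgd2 : ∃ G2, HasDerivAt (deriv g) G2 u := by
    have hFu : c + g u ^ 2 - g u ^ 2 * lam u ^ 2 ≠ 0 := by
      rw [hFeq u hu]; exact pow_ne_zero 2 (hg' u hu)
    have hFd : HasDerivAt (fun t => c + g t ^ 2 - g t ^ 2 * lam t ^ 2)
        (2 * g u ^ 1 * deriv g u - (2 * g u ^ 1 * deriv g u * lam u ^ 2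
          + g u ^ 2 * (2 * lam u ^ 1 * Lv))) u := by
      have hgd := (hgdiff u hu).hasDerivAt
      have h1 := ((hgd.pow 2).const_add c).sub ((hgd.pow 2).mul (hLd.pow 2))
      refine HasDerivAt.congr_deriv h1 (Eq.symm ?_); push_cast [Pi.pow_apply]; ring
    have hQ := (hFd.sqrt hFu).const_mul ε
    refine ⟨_, hQ.congr_of_eventuallyEq ?_⟩
    exact Filter.eventuallyEq_of_mem (hIo.mem_nhds hu) (fun t ht => hεdef t ht)
  obtain ⟨G2, hG2⟩ := hgd2
  set R'' : ℝ := G2 / Real.sqrt c with hR''def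
  have hR2 : HasDerivAt (deriv r) R'' u := by
    have : deriv r = fun t => deriv g t / Real.sqrt c := funext hderivr
    rw [this, hR''def]
    exact hG2.div_const _
  -- the second-order relation
  have h3 : deriv r u * R'' + (r u * deriv r u * lam u ^ 2 + r u ^ 2 * lam u * Lv)
      = r u * deriv r u := by
    have hEE : (fun t => deriv r t ^ 2 + r t ^ 2 * lam t ^ 2)
        =ᶠ[nhds u] (fun t => r t ^ 2 + 1) :=
      Filter.eventuallyEq_of_mem (hIo.mem_nhds hu) (fun t ht => part1 t ht)
    have hD1 : HasDerivAt (fun t => deriv r t ^ 2 + r t ^ 2 * lam t ^ 2)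
        ((2 * deriv r u ^ 1 * R'') + ((2 * r u ^ 1 * deriv r u) * lam u ^ 2
          + r u ^ 2 * (2 * lam u ^ 1 * Lv))) u := by
      have h1 := (hR2.pow 2).add (((hRd u hu).pow 2).mul (hLd.pow 2))
      refine HasDerivAt.congr_deriv h1 (Eq.symm ?_); push_cast [Pi.pow_apply]; ring
    have hD2 : HasDerivAt (fun t => r t ^ 2 + 1) (2 * r u ^ 1 * deriv r u) u := by
      have h1 := ((hRd u hu).pow 2).add_const 1
      refine HasDerivAt.congr_deriv h1 (Eq.symm ?_); push_cast; ring
    have e1 := hD1.deriv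
    have e2 := hD2.deriv
    rw [hEE.deriv_eq, e2] at e1
    nlinarith [e1]
  -- derivative of θ at u
  have hθcont : ∀ t ∈ Set.Ioo a₁ a₂,
      ContinuousAt (fun τ => r τ * lam τ / (r τ ^ 2 + 1)) t := by
    intro t ht
    have hgc : ContinuousAt g t := (hgdiff t ht).continuousAt
    have hrc : ContinuousAt r t := by rw [hrfun]; exact hgc.div_const _
    have hlc : ContinuousAt lam t := by
      rw [hlamfun]
      exact continuousAt_const.add (hgc.zpow₀ _ (Or.inl (hgpos t ht).ne'))
    have hden : (0:ℝ) < r t ^ 2 + 1 := by positivity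
    exact (hrc.mul hlc).div ((hrc.pow 2).add continuousAt_const) hden.ne'
  have hθd : HasDerivAt θ (r u * lam u / s ^ 2) u := by
    have hfun : θ = fun t => ∫ τ in t₀..t, r τ * lam τ / (r τ ^ 2 + 1) := funext hθ
    rw [hfun]
    have hsub : Set.uIcc t₀ u ⊆ Set.Ioo a₁ a₂ :=
      Set.OrdConnected.uIcc_subset Set.ordConnected_Ioo ht₀ hu
    have hint : IntervalIntegrable (fun τ => r τ * lam τ / (r τ ^ 2 + 1))
        MeasureTheory.volume t₀ u :=
      ContinuousOn.intervalIntegrable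
        (fun t ht => ((hθcont t (hsub ht)).continuousWithinAt))
    have hmeas := ContinuousAt.stronglyMeasurableAtFilter (μ := MeasureTheory.volume) hIo hθcont u hu
    have := intervalIntegral.integral_hasDerivAt_right hint hmeas (hθcont u hu)
    refine HasDerivAt.congr_deriv this (Eq.symm ?_)
    rw [hs2]
  -- indices and basis vectors
  have hk2 : k - 1 < n + 2 := by omega
  have hk3 : k < n + 2 := by omega
  set i₁ : Fin (n+2) := ⟨k-1, hk2⟩ with hi₁def
  set i₂ : Fin (n+2) := ⟨k, hk3⟩ with hi₂def
  have hval1 : (i₁ : ℕ) = k - 1 := rfl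
  have hval2 : (i₂ : ℕ) = k := rfl
  have hi12 : i₁ ≠ i₂ := by
    intro hh
    have h2 := congrArg Fin.val hh
    rw [hval1, hval2] at h2
    omega
  set e₁ : Fin (n+2) → ℝ := Pi.single i₁ 1 with he₁def
  set e₂ : Fin (n+2) → ℝ := Pi.single i₂ 1 with he₂def
  have hs10 : e₂ i₁ = 0 := Pi.single_eq_of_ne hi12 _
  have hs20 : e₁ i₂ = 0 := Pi.single_eq_of_ne hi12.symm _
  have hs11 : e₁ i₁ = 1 := Pi.single_eq_same i₁ 1
  have hs22 : e₂ i₂ = 1 := Pi.single_eq_same i₂ 1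
  have hy1 : y i₁ = 0 := hy i₁ (Or.inl hval1)
  have hy2 : y i₂ = 0 := hy i₂ (Or.inr hval2)
  have hklt : k - 1 < k := by omega
  have hknlt : ¬ (k < k) := lt_irrefl k
  have hB₂e : ∀ z, B₂ z = Real.cosh z • e₁ + Real.sinh z • e₂ := by
    intro z; funext i
    rw [hB₂]
    rcases eq_or_ne i i₁ with rfl | h1
    · rw [if_pos hval1]
      simp [hs11, hs10]
    · rcases eq_or_ne i i₂ with rfl | h2
      · rw [if_neg (by rw [hval2]; omega), if_pos hval2]
        simp [hs22, hs20]
      · rw [if_neg (fun hh => h1 (Fin.ext (hh.trans hval1.symm))),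
            if_neg (fun hh => h2 (Fin.ext (hh.trans hval2.symm)))]
        simp [he₁def, he₂def, Pi.single_eq_of_ne h1, Pi.single_eq_of_ne h2]
  have hB₃e : ∀ z, B₃ z = Real.sinh z • e₁ + Real.cosh z • e₂ := by
    intro z; funext i
    rw [hB₃]
    rcases eq_or_ne i i₁ with rfl | h1
    · rw [if_pos hval1]
      simp [hs11, hs10]
    · rcases eq_or_ne i i₂ with rfl | h2
      · rw [if_neg (by rw [hval2]; omega), if_pos hval2]
        simp [hs22, hs20]
      · rw [if_neg (fun hh => h1 (Fin.ext (hh.trans hval1.symm))),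
            if_neg (fun hh => h2 (Fin.ext (hh.trans hval2.symm)))]
        simp [he₁def, he₂def, Pi.single_eq_of_ne h1, Pi.single_eq_of_ne h2]
  -- function forms of φ and ν
  have hφfun : φ = fun t => r t • y + (Real.sqrt (r t ^ 2 + 1) * Real.cosh (θ t)) • e₁
      + (Real.sqrt (r t ^ 2 + 1) * Real.sinh (θ t)) • e₂ := by
    funext t
    rw [hφdef t, hB₂e]
    module
  have hνfun : ν = fun t => (-(r t * lam t)) • y
      + (-(r t ^ 2 * lam t / Real.sqrt (r t ^ 2 + 1)) * Real.cosh (θ t)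
         + (deriv r t / Real.sqrt (r t ^ 2 + 1)) * Real.sinh (θ t)) • e₁
      + (-(r t ^ 2 * lam t / Real.sqrt (r t ^ 2 + 1)) * Real.sinh (θ t)
         + (deriv r t / Real.sqrt (r t ^ 2 + 1)) * Real.cosh (θ t)) • e₂ := by
    funext t
    rw [hνdef t, hB₂e, hB₃e]
    module
  -- derivatives of the scalar coefficient functions
  have hRdu := hRd u hu
  have hsqne : Real.sqrt (r u ^ 2 + 1) ≠ 0 := by rw [← hsdef]; exact hsne
  have hsd : HasDerivAt (fun t => Real.sqrt (r t ^ 2 + 1)) (r u * deriv r u / s) u := by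
    have h1 := (((hRdu.pow 2).add_const 1).sqrt hru2.ne')
    refine HasDerivAt.congr_deriv h1 (Eq.symm ?_)
    simp only [Pi.pow_apply, Nat.reduceSub, pow_one, Nat.cast_ofNat]
    rw [← hsdef]
    field_simp
  have hBc : HasDerivAt (fun t => Real.sqrt (r t ^ 2 + 1) * Real.cosh (θ t))
      ((r u * deriv r u / s) * Real.cosh (θ u) + (r u * lam u / s) * Real.sinh (θ u)) u := by
    have h1 := hsd.mul (hθd.cosh)
    refine HasDerivAt.congr_deriv h1 (Eq.symm ?_)
    rw [← hsdef]
    field_simp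
  have hCc : HasDerivAt (fun t => Real.sqrt (r t ^ 2 + 1) * Real.sinh (θ t))
      ((r u * deriv r u / s) * Real.sinh (θ u) + (r u * lam u / s) * Real.cosh (θ u)) u := by
    have h1 := hsd.mul (hθd.sinh)
    refine HasDerivAt.congr_deriv h1 (Eq.symm ?_)
    rw [← hsdef]
    field_simp
  have hp : HasDerivAt (fun t => r t ^ 2 * lam t / Real.sqrt (r t ^ 2 + 1))
      ((2 * r u * deriv r u * lam u + r u ^ 2 * Lv) / s
        - r u ^ 3 * lam u * deriv r u / s ^ 3) u := by
    have h1 := ((hRdu.pow 2).mul hLd).div hsd hsqne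
    refine HasDerivAt.congr_deriv h1 (Eq.symm ?_)
    rw [← hsdef]
    simp only [Pi.pow_apply, Pi.mul_apply]
    field_simp
    ring
  have hq : HasDerivAt (fun t => deriv r t / Real.sqrt (r t ^ 2 + 1))
      (R'' / s - r u * deriv r u ^ 2 / s ^ 3) u := by
    have h1 := hR2.div hsd hsqne
    refine HasDerivAt.congr_deriv h1 (Eq.symm ?_)
    rw [← hsdef]
    field_simp
  -- the three key scalar identities
  set μ : ℝ := -((n:ℝ) * h - ((n:ℝ) - 1) * lam u) with hμdef
  have idA : μ * deriv r u = -(deriv r u * lam u + r u * Lv) := by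
    linear_combination hLvrel
  have idI : μ * (r u * deriv r u / s)
      = -((2 * r u * deriv r u * lam u + r u ^ 2 * Lv) / s
          - r u ^ 3 * lam u * deriv r u / s ^ 3)
        + (deriv r u / s) * (r u * lam u / s ^ 2) := by
    field_simp
    linear_combination s ^ 2 * idA + deriv r u * lam u * hs2
  have idII : μ * (r u * lam u / s)
      = -(r u ^ 2 * lam u / s) * (r u * lam u / s ^ 2)
        + (R'' / s - r u * deriv r u ^ 2 / s ^ 3) := by
    have hR''v : R'' = (r u * deriv r u - r u * deriv r u * lam u ^ 2
        - r u ^ 2 * lam u * Lv) / deriv r u := by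
      rw [eq_div_iff hR'ne]; linear_combination h3
    rw [hR''v]
    field_simp
    linear_combination (lam u * s ^ 2) * idA + deriv r u * h1s
  -- derivative of φ and ν at u
  have hφd : HasDerivAt φ (deriv r u • y
      + ((r u * deriv r u / s) * Real.cosh (θ u) + (r u * lam u / s) * Real.sinh (θ u)) • e₁
      + ((r u * deriv r u / s) * Real.sinh (θ u) + (r u * lam u / s) * Real.cosh (θ u)) • e₂) u := by
    rw [hφfun]
    exact ((hRdu.smul_const y).add (hBc.smul_const e₁)).add (hCc.smul_const e₂)
  have K1 : HasDerivAt (fun t => -(r t * lam t)) (μ * deriv r u) u := by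
    have h1 := (hRdu.mul hLd).neg
    rw [idA]
    exact h1
  have K2 : HasDerivAt (fun t => -(r t ^ 2 * lam t / Real.sqrt (r t ^ 2 + 1)) * Real.cosh (θ t)
      + (deriv r t / Real.sqrt (r t ^ 2 + 1)) * Real.sinh (θ t))
      (μ * ((r u * deriv r u / s) * Real.cosh (θ u) + (r u * lam u / s) * Real.sinh (θ u))) u := by
    have h1 := ((hp.neg).mul (hθd.cosh)).add (hq.mul (hθd.sinh))
    refine HasDerivAt.congr_deriv h1 (Eq.symm ?_)
    simp only [Pi.neg_apply]
    rw [← hsdef]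
    linear_combination Real.cosh (θ u) * idI + Real.sinh (θ u) * idII
  have K3 : HasDerivAt (fun t => -(r t ^ 2 * lam t / Real.sqrt (r t ^ 2 + 1)) * Real.sinh (θ t)
      + (deriv r t / Real.sqrt (r t ^ 2 + 1)) * Real.cosh (θ t))
      (μ * ((r u * deriv r u / s) * Real.sinh (θ u) + (r u * lam u / s) * Real.cosh (θ u))) u := by
    have h1 := ((hp.neg).mul (hθd.sinh)).add (hq.mul (hθd.cosh))
    refine HasDerivAt.congr_deriv h1 (Eq.symm ?_)
    simp only [Pi.neg_apply]
    rw [← hsdef]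
    linear_combination Real.sinh (θ u) * idI + Real.cosh (θ u) * idII
  have hνd : HasDerivAt ν ((μ * deriv r u) • y
      + (μ * ((r u * deriv r u / s) * Real.cosh (θ u) + (r u * lam u / s) * Real.sinh (θ u))) • e₁
      + (μ * ((r u * deriv r u / s) * Real.sinh (θ u) + (r u * lam u / s) * Real.cosh (θ u))) • e₂) u := by
    rw [hνfun]
    exact ((K1.smul_const y).add (K2.smul_const e₁)).add (K3.smul_const e₂)
  -- values at u
  have hφu : φ u = r u • y + (s * Real.cosh (θ u)) • e₁ + (s * Real.sinh (θ u)) • e₂ := by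
    rw [hφdef u, hB₂e, hsdef]
    module
  have hνu : ν u = (-(r u * lam u)) • y
      + (-(r u ^ 2 * lam u / s) * Real.cosh (θ u) + (deriv r u / s) * Real.sinh (θ u)) • e₁
      + (-(r u ^ 2 * lam u / s) * Real.sinh (θ u) + (deriv r u / s) * Real.cosh (θ u)) • e₂ := by
    rw [hνdef u, hB₂e, hB₃e, hsdef]
    module
  have hcs := Real.cosh_sq_sub_sinh_sq (θ u)
  refine ⟨?_, ?_, ?_, ?_, ?_, ?_⟩
  · rw [hφu]
    rw [he₁def, he₂def]
    simp only [semiForm_add_left, semiForm_add_right, semiForm_smul_left, semiForm_smul_right,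
      semiForm_single_left, semiForm_single_right, hval1, hval2, if_pos hklt, if_neg hknlt,
      Pi.add_apply, Pi.smul_apply, smul_eq_mul,
      Pi.single_eq_same, Pi.single_eq_of_ne hi12, Pi.single_eq_of_ne hi12.symm, hy1, hy2, hyy]
    linear_combination (-(s^2)) * hcs - hs2
  · rw [hφd.deriv]
    rw [he₁def, he₂def]
    simp only [semiForm_add_left, semiForm_add_right, semiForm_smul_left, semiForm_smul_right,
      semiForm_single_left, semiForm_single_right, hval1, hval2, if_pos hklt, if_neg hknlt,
      Pi.add_apply, Pi.smul_apply, smul_eq_mul,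
      Pi.single_eq_same, Pi.single_eq_of_ne hi12, Pi.single_eq_of_ne hi12.symm, hy1, hy2, hyy]
    field_simp
    linear_combination (r u^2*lam u^2 - r u^2*deriv r u^2) * hcs + h1s + deriv r u^2 * hs2
  · rw [hνu]
    rw [he₁def, he₂def]
    simp only [semiForm_add_left, semiForm_add_right, semiForm_smul_left, semiForm_smul_right,
      semiForm_single_left, semiForm_single_right, hval1, hval2, if_pos hklt, if_neg hknlt,
      Pi.add_apply, Pi.smul_apply, smul_eq_mul,
      Pi.single_eq_same, Pi.single_eq_of_ne hi12, Pi.single_eq_of_ne hi12.symm, hy1, hy2, hyy]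
    field_simp
    linear_combination (deriv r u ^ 2 - r u ^ 4 * lam u ^ 2) * hcs + r u ^ 2 * lam u ^ 2 * hs2 + h1s
  · rw [hνu, hφd.deriv]
    rw [he₁def, he₂def]
    simp only [semiForm_add_left, semiForm_add_right, semiForm_smul_left, semiForm_smul_right,
      semiForm_single_left, semiForm_single_right, hval1, hval2, if_pos hklt, if_neg hknlt,
      Pi.add_apply, Pi.smul_apply, smul_eq_mul,
      Pi.single_eq_same, Pi.single_eq_of_ne hi12, Pi.single_eq_of_ne hi12.symm, hy1, hy2, hyy]
    field_simp
    linear_combination (r u * lam u * deriv r u * (r u ^ 2 + 1)) * hcs - deriv r u * r u * lam u * hs2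
  · intro v hv hvy
    have hv1 : v i₁ = 0 := hv i₁ (Or.inl hval1)
    have hv2 : v i₂ = 0 := hv i₂ (Or.inr hval2)
    have hyv : semiForm k y v = 0 := by rw [semiForm_comm]; exact hvy
    rw [hνu]
    rw [he₁def, he₂def]
    simp only [semiForm_add_left, semiForm_smul_left,
      semiForm_single_left, hval1, hval2,
      if_pos hklt, if_neg hknlt, hv1, hv2, hyv]
    ring
  · rw [hνd.deriv, hφd.deriv]
    module
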